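/- Let R be a commutative ring and σ : P⁻¹ → P⁰ a homomorphism of projective R-modules with cokernel T. If σ, viewed as a two-term complex, is a generator of the derived category D(R), then for every prime 𝔭 of R either T ⊗_R κ(𝔭) ≠ 0 or Ker(σ ⊗_R κ(𝔭)) ≠ 0, i.e. σ ⊗_R κ(𝔭) is not an isomorphism. -/

import Mathlib

open TensorProduct

universe u

/-- let `σ : P⁻¹ → P⁰` (projective `R`-modules, cokernel `T`) be a
generator of the derived category `D(R)`.  For a two-term complex of projectives, being
a generator means exactly that for every nonzero `R`-module `M` some
`Hom_{D(R)}(σ, M[i]) = Hom_{K(R)}(σ, M[i])` is nonzero, i.e. the map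
`Hom_R(σ, M) : Hom(P⁰, M) → Hom(P⁻¹, M)` is not an isomorphism (this is the form of the
hypothesis used below).  Then for every prime `𝔭`, `T ⊗_R κ(𝔭) ≠ 0` or
`Ker(σ ⊗_R κ(𝔭)) ≠ 0`, i.e. `σ ⊗_R κ(𝔭)` is not an isomorphism. -/
theorem stmt16 {R : Type u} [CommRing R]
    {P1 P0 T : Type u} [AddCommGroup P1] [AddCommGroup P0] [AddCommGroup T]
    [Module R P1] [Module R P0] [Module R T]
    [Module.Projective R P1] [Module.Projective R P0]
    (σ : P1 →ₗ[R] P0) (π : P0 →ₗ[R] T) (hπ : Function.Surjective π)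
    (hcoker : LinearMap.ker π = LinearMap.range σ)
    -- `σ` is a generator of `D(R)`: no nonzero module `M` has
    -- `Hom_{D(R)}(σ, M[i]) = 0` for all `i`; equivalently `Hom_R(σ, M)` is not bijective
    (hgen : ∀ (M : Type u) [AddCommGroup M] [Module R M], Nontrivial M →
      ¬ Function.Bijective (fun f : P0 →ₗ[R] M => f ∘ₗ σ)) :
    ∀ p : PrimeSpectrum R,
      Nontrivial ((IsLocalRing.ResidueField (Localization.AtPrime p.asIdeal)) ⊗[R] T) ∨
      LinearMap.ker (σ.baseChange
        (IsLocalRing.ResidueField (Localization.AtPrime p.asIdeal))) ≠ ⊥ := by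
  intro p
  by_contra hcon
  push_neg at hcon
  obtain ⟨h1, h2⟩ := hcon
  set κ := IsLocalRing.ResidueField (Localization.AtPrime p.asIdeal) with hκ
  have hsub : Subsingleton (κ ⊗[R] T) := h1
  -- σ base-changed to κ is bijective
  have hinj : Function.Injective (σ.baseChange κ) := by
    rw [← LinearMap.ker_eq_bot]; exact h2
  have hex : Function.Exact (σ.baseChange κ) (π.baseChange κ) := by
    have hE : Function.Exact σ π := LinearMap.exact_iff.mpr hcoker
    have := lTensor_exact (f := σ) (g := π) κ hE hπ
    simpa [LinearMap.baseChange_eq_ltensor, Function.Exact] using this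
  have hsurj : Function.Surjective (σ.baseChange κ) := by
    intro x
    have : π.baseChange κ x = 0 := Subsingleton.elim _ _
    exact (hex x).mp this
  let e : (κ ⊗[R] P1) ≃ₗ[κ] (κ ⊗[R] P0) :=
    LinearEquiv.ofBijective (σ.baseChange κ) ⟨hinj, hsurj⟩
  -- build the inverse of `Hom(σ, κ)`
  let inv : (P1 →ₗ[R] κ) → (P0 →ₗ[R] κ) := fun g =>
    (((g.liftBaseChange κ) ∘ₗ (e.symm : κ ⊗[R] P0 →ₗ[κ] κ ⊗[R] P1)).restrictScalars R)
      ∘ₗ (TensorProduct.mk R κ P0 1)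
  have key : ∀ (f : P0 →ₗ[R] κ) (x : κ ⊗[R] P0),
      f.liftBaseChange κ x = ((f ∘ₗ σ).liftBaseChange κ) (e.symm x) := by
    intro f x
    have hx : x = e (e.symm x) := (e.apply_symm_apply x).symm
    rw [hx]
    generalize (e.symm x) = y
    rw [e.symm_apply_apply]
    induction y using TensorProduct.induction_on with
    | zero => simp
    | tmul c m =>
        show f.liftBaseChange κ (σ.baseChange κ (c ⊗ₜ[R] m)) = _
        simp [e, LinearEquiv.ofBijective_apply, LinearMap.liftBaseChange_tmul]
    | add a b ha hb => simp [map_add, ha, hb]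
  have hbij : Function.Bijective (fun f : P0 →ₗ[R] κ => f ∘ₗ σ) := by
    apply Function.bijective_iff_has_inverse.mpr
    refine ⟨inv, ?_, ?_⟩
    · intro f
      ext x
      have := key f ((1 : κ) ⊗ₜ[R] x)
      simp only [inv, LinearMap.coe_comp, Function.comp_apply,
        LinearMap.coe_restrictScalars, TensorProduct.mk_apply, LinearEquiv.coe_coe]
      rw [← this, LinearMap.liftBaseChange_tmul, one_smul]
    · intro g
      ext x
      have h1x : (1 : κ) ⊗ₜ[R] (σ x) = e ((1 : κ) ⊗ₜ[R] x) := by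
        show _ = σ.baseChange κ ((1 : κ) ⊗ₜ[R] x)
        simp [e, LinearEquiv.ofBijective_apply]
      simp only [inv, LinearMap.coe_comp, Function.comp_apply,
        LinearMap.coe_restrictScalars, TensorProduct.mk_apply, LinearEquiv.coe_coe]
      rw [h1x, e.symm_apply_apply, LinearMap.liftBaseChange_tmul, one_smul]
  exact hgen κ inferInstance hbij
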